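/- (Kinetic shaping identity.) Let m, l > 0, m̄ > 0, χ ∈ ℝ³, let 𝕀 be a symmetric 3×3 real matrix, and let ρ ∈ ℝ with ρ ≠ 0 and ρ ≠ m̄. Define K(Ω, w) = ½ Ω·𝕀Ω + m l w·(Ω × χ) + ½ m̄ ‖w‖², τ(Ω) = (1/ρ − 1/m̄) m l (Ω × χ), and the controlled kinetic energy K_{τ,σ,ρ}(Ω, v) = K(Ω, v + τ(Ω)) + ½ (m̄ρ/(ρ − m̄)) ‖τ(Ω)‖² + ½ (ρ − m̄) ‖v + (m l/m̄)(Ω × χ) + τ(Ω)‖². Then for all Ω, v ∈ ℝ³: K_{τ,σ,ρ}(Ω, v) = ½ Ω·𝕀Ω + m l v·(Ω × χ) + ½ ρ ‖v‖². In particular, the gradient identities ∇_Ω K_{τ,σ,ρ}(Ω,v) = 𝕀Ω + m l (χ × v) = ∇_Ω K(Ω,v) and ∇_v K_{τ,σ,ρ}(Ω,v) = ρ v + m l (Ω × χ) = ∇_v K(Ω,v) + (ρ − m̄) v hold. -/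

import Mathlib

open Matrix

lemma isBdd_dot : IsBoundedBilinearMap ℝ
    (fun p : (Fin 3 → ℝ) × (Fin 3 → ℝ) => p.1 ⬝ᵥ p.2) where
  add_left x₁ x₂ y := add_dotProduct x₁ x₂ y
  smul_left c x y := smul_dotProduct c x y
  add_right x y₁ y₂ := dotProduct_add x y₁ y₂
  smul_right c x y := dotProduct_smul c x y
  bound := by
    refine ⟨3, by norm_num, fun x y => ?_⟩
    calc ‖x ⬝ᵥ y‖ ≤ ∑ i : Fin 3, ‖x i * y i‖ := norm_sum_le _ _
    _ ≤ ∑ i : Fin 3, ‖x‖ * ‖y‖ := by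
        refine Finset.sum_le_sum fun i _ => ?_
        rw [norm_mul]
        exact mul_le_mul (norm_le_pi_norm x i) (norm_le_pi_norm y i)
          (norm_nonneg _) (norm_nonneg _)
    _ = 3 * ‖x‖ * ‖y‖ := by simp [Finset.sum_const]; ring

noncomputable def dotCLM (c : Fin 3 → ℝ) : (Fin 3 → ℝ) →L[ℝ] ℝ :=
  LinearMap.toContinuousLinearMap
    { toFun := fun y => y ⬝ᵥ c
      map_add' := fun x y => add_dotProduct x y c
      map_smul' := fun r x => smul_dotProduct r x c }

@[simp] lemma dotCLM_apply (c y : Fin 3 → ℝ) : dotCLM c y = y ⬝ᵥ c := rfl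

noncomputable def mulVecCLM (M : Matrix (Fin 3) (Fin 3) ℝ) :
    (Fin 3 → ℝ) →L[ℝ] (Fin 3 → ℝ) :=
  LinearMap.toContinuousLinearMap M.mulVecLin

@[simp] lemma mulVecCLM_apply (M : Matrix (Fin 3) (Fin 3) ℝ) (y : Fin 3 → ℝ) :
    mulVecCLM M y = M *ᵥ y := rfl

lemma hasFDerivAt_quad (M : Matrix (Fin 3) (Fin 3) ℝ) (x : Fin 3 → ℝ) :
    HasFDerivAt (fun y : Fin 3 → ℝ => y ⬝ᵥ M *ᵥ y)
      (dotCLM (M *ᵥ x + Mᵀ *ᵥ x)) x := by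
  have h := (isBdd_dot.hasFDerivAt (x, M *ᵥ x)).comp x
    ((ContinuousLinearMap.id ℝ (Fin 3 → ℝ)).hasFDerivAt.prodMk (mulVecCLM M).hasFDerivAt)
  have heq : ((isBdd_dot.deriv (x, M *ᵥ x)).comp
      (((ContinuousLinearMap.id ℝ (Fin 3 → ℝ))).prod (mulVecCLM M)))
      = dotCLM (M *ᵥ x + Mᵀ *ᵥ x) := by
    ext δ
    simp only [ContinuousLinearMap.comp_apply, ContinuousLinearMap.prod_apply,
      ContinuousLinearMap.coe_id', id_eq, mulVecCLM_apply,
      IsBoundedBilinearMap.deriv_apply, dotCLM_apply]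
    rw [dotProduct_add, Matrix.dotProduct_mulVec, ← Matrix.mulVec_transpose,
      dotProduct_comm]
    ring
  rw [heq] at h
  exact h

lemma fderiv_quadlin (M : Matrix (Fin 3) (Fin 3) ℝ) (hM : Mᵀ = M) (b : Fin 3 → ℝ)
    (a : ℝ) (x δ : Fin 3 → ℝ) :
    fderiv ℝ (fun y => (1/2) * (y ⬝ᵥ M *ᵥ y) + y ⬝ᵥ b + a) x δ = δ ⬝ᵥ (M *ᵥ x + b) := by
  have hL : HasFDerivAt (fun y : Fin 3 → ℝ => y ⬝ᵥ b) (dotCLM b) x := (dotCLM b).hasFDerivAt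
  have h := (((hasFDerivAt_quad M x).const_mul (1/2)).add hL).add_const a
  rw [(show HasFDerivAt (fun y : Fin 3 → ℝ => (1/2) * (y ⬝ᵥ M *ᵥ y) + y ⬝ᵥ b + a) _ x from h).fderiv]
  simp only [ContinuousLinearMap.add_apply, ContinuousLinearMap.coe_smul',
    Pi.smul_apply, dotCLM_apply, smul_eq_mul, hM, dotProduct_add]
  ring

/-- Kinetic energy `K(Ω,w) = ½ Ω·𝕀Ω + m l w·(Ω×χ) + ½ m̄ ‖w‖²`. -/
noncomputable def kinK (m mbar l : ℝ) (χ : Fin 3 → ℝ) (I : Matrix (Fin 3) (Fin 3) ℝ)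
    (Ω w : Fin 3 → ℝ) : ℝ :=
  (1 / 2) * (Ω ⬝ᵥ I *ᵥ Ω) + m * l * (w ⬝ᵥ Ω ⨯₃ χ) + (1 / 2) * mbar * (w ⬝ᵥ w)

/-- `τ(Ω) = (1/ρ − 1/m̄) m l (Ω × χ)`. -/
noncomputable def tauMap (m mbar l ρ : ℝ) (χ : Fin 3 → ℝ) (Ω : Fin 3 → ℝ) : Fin 3 → ℝ :=
  ((1 / ρ - 1 / mbar) * (m * l)) • (Ω ⨯₃ χ)

/-- The controlled kinetic energy
`K_{τ,σ,ρ}(Ω,v) = K(Ω, v + τ(Ω)) + ½ (m̄ρ/(ρ−m̄)) ‖τ(Ω)‖²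
  + ½ (ρ−m̄) ‖v + (m l/m̄)(Ω×χ) + τ(Ω)‖²`. -/
noncomputable def kinKc (m mbar l ρ : ℝ) (χ : Fin 3 → ℝ) (I : Matrix (Fin 3) (Fin 3) ℝ)
    (Ω v : Fin 3 → ℝ) : ℝ :=
  kinK m mbar l χ I Ω (v + tauMap m mbar l ρ χ Ω)
    + (1 / 2) * (mbar * ρ / (ρ - mbar)) * (tauMap m mbar l ρ χ Ω ⬝ᵥ tauMap m mbar l ρ χ Ω)
    + (1 / 2) * (ρ - mbar) *
      ((v + (m * l / mbar) • (Ω ⨯₃ χ) + tauMap m mbar l ρ χ Ω) ⬝ᵥ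
        (v + (m * l / mbar) • (Ω ⨯₃ χ) + tauMap m mbar l ρ χ Ω))

lemma shaping (m mbar l ρ : ℝ) (hmbar : mbar ≠ 0) (hρ : ρ ≠ 0) (hρm : ρ ≠ mbar)
    (χ : Fin 3 → ℝ) (I : Matrix (Fin 3) (Fin 3) ℝ) (Ω v : Fin 3 → ℝ) :
    kinKc m mbar l ρ χ I Ω v
      = (1 / 2) * (Ω ⬝ᵥ I *ᵥ Ω) + m * l * (v ⬝ᵥ Ω ⨯₃ χ) + (1 / 2) * ρ * (v ⬝ᵥ v) := by
  unfold kinKc kinK tauMap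
  set c := Ω ⨯₃ χ with hc
  simp only [dotProduct_add, add_dotProduct, dotProduct_smul, smul_dotProduct, smul_eq_mul]
  rw [dotProduct_comm c v]
  set s := c ⬝ᵥ c
  set p := v ⬝ᵥ c
  set q := v ⬝ᵥ v
  have hsub : ρ - mbar ≠ 0 := sub_ne_zero.mpr (by exact fun h => hρm h)
  field_simp
  ring

/-- Kinetic shaping identity: `K_{τ,σ,ρ}(Ω,v) = ½ Ω·𝕀Ω + m l v·(Ω×χ) + ½ ρ ‖v‖²`,
together with the gradient identities
`∇_Ω K_{τ,σ,ρ} = 𝕀Ω + m l (χ×v) = ∇_Ω K` and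
`∇_v K_{τ,σ,ρ} = ρ v + m l (Ω×χ) = ∇_v K + (ρ−m̄) v`
(gradients with respect to the dot product, expressed via `fderiv`). -/
theorem kinetic_shaping_identity (m mbar l ρ : ℝ) (hm : 0 < m) (hl : 0 < l)
    (hmbar : 0 < mbar) (χ : Fin 3 → ℝ) (I : Matrix (Fin 3) (Fin 3) ℝ) (hI : Iᵀ = I)
    (hρ : ρ ≠ 0) (hρm : ρ ≠ mbar) :
    (∀ Ω v : Fin 3 → ℝ,
      kinKc m mbar l ρ χ I Ω v
        = (1 / 2) * (Ω ⬝ᵥ I *ᵥ Ω) + m * l * (v ⬝ᵥ Ω ⨯₃ χ) + (1 / 2) * ρ * (v ⬝ᵥ v)) ∧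
    (∀ Ω v δ : Fin 3 → ℝ,
      fderiv ℝ (fun Ω' => kinKc m mbar l ρ χ I Ω' v) Ω δ
          = δ ⬝ᵥ (I *ᵥ Ω + (m * l) • (χ ⨯₃ v)) ∧
      fderiv ℝ (fun Ω' => kinK m mbar l χ I Ω' v) Ω δ
          = δ ⬝ᵥ (I *ᵥ Ω + (m * l) • (χ ⨯₃ v))) ∧
    (∀ Ω v δ : Fin 3 → ℝ,
      fderiv ℝ (fun v' => kinKc m mbar l ρ χ I Ω v') v δ
          = δ ⬝ᵥ (ρ • v + (m * l) • (Ω ⨯₃ χ)) ∧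
      fderiv ℝ (fun v' => kinK m mbar l χ I Ω v') v δ + (ρ - mbar) * (δ ⬝ᵥ v)
          = δ ⬝ᵥ (ρ • v + (m * l) • (Ω ⨯₃ χ))) := by
  have hmb : mbar ≠ 0 := ne_of_gt hmbar
  have hsmul : ∀ (r : ℝ) (x : Fin 3 → ℝ), (r • (1 : Matrix (Fin 3) (Fin 3) ℝ)) *ᵥ x = r • x := by
    intro r x
    rw [Matrix.smul_mulVec, Matrix.one_mulVec]
  have hsT : ∀ r : ℝ, (r • (1 : Matrix (Fin 3) (Fin 3) ℝ))ᵀ = r • 1 := by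
    intro r; rw [Matrix.transpose_smul, Matrix.transpose_one]
  refine ⟨fun Ω v => shaping m mbar l ρ hmb hρ hρm χ I Ω v, ?_, ?_⟩
  · intro Ω v δ
    have hfc : (fun Ω' => kinKc m mbar l ρ χ I Ω' v)
        = fun Ω' => (1/2) * (Ω' ⬝ᵥ I *ᵥ Ω') + Ω' ⬝ᵥ ((m * l) • (χ ⨯₃ v))
            + ((1/2) * ρ * (v ⬝ᵥ v)) := by
      funext Ω'
      rw [shaping m mbar l ρ hmb hρ hρm χ I Ω' v, triple_product_permutation,
        dotProduct_smul, smul_eq_mul]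
    have hfk : (fun Ω' => kinK m mbar l χ I Ω' v)
        = fun Ω' => (1/2) * (Ω' ⬝ᵥ I *ᵥ Ω') + Ω' ⬝ᵥ ((m * l) • (χ ⨯₃ v))
            + ((1/2) * mbar * (v ⬝ᵥ v)) := by
      funext Ω'
      unfold kinK
      rw [triple_product_permutation, dotProduct_smul, smul_eq_mul]
    rw [hfc, hfk, fderiv_quadlin I hI _ _ Ω δ, fderiv_quadlin I hI _ _ Ω δ]
    exact ⟨rfl, rfl⟩
  · intro Ω v δ
    have hfc : (fun v' => kinKc m mbar l ρ χ I Ω v')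
        = fun v' => (1/2) * (v' ⬝ᵥ (ρ • (1 : Matrix (Fin 3) (Fin 3) ℝ)) *ᵥ v')
            + v' ⬝ᵥ ((m * l) • (Ω ⨯₃ χ)) + ((1/2) * (Ω ⬝ᵥ I *ᵥ Ω)) := by
      funext v'
      rw [shaping m mbar l ρ hmb hρ hρm χ I Ω v', hsmul ρ v', dotProduct_smul,
        dotProduct_smul, smul_eq_mul, smul_eq_mul]
      ring
    have hfk : (fun v' => kinK m mbar l χ I Ω v')
        = fun v' => (1/2) * (v' ⬝ᵥ (mbar • (1 : Matrix (Fin 3) (Fin 3) ℝ)) *ᵥ v')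
            + v' ⬝ᵥ ((m * l) • (Ω ⨯₃ χ)) + ((1/2) * (Ω ⬝ᵥ I *ᵥ Ω)) := by
      funext v'
      unfold kinK
      rw [hsmul mbar v', dotProduct_smul, dotProduct_smul, smul_eq_mul, smul_eq_mul]
      ring
    constructor
    · rw [hfc, fderiv_quadlin _ (hsT ρ) _ _ v δ, hsmul ρ v]
    · rw [hfk, fderiv_quadlin _ (hsT mbar) _ _ v δ, hsmul mbar v]
      simp only [dotProduct_add, dotProduct_smul, smul_eq_mul]
      ring
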